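/- Let d ≥ 1, let ρ ∈ [0,∞), let Λ ⊆ [0,1]^d be ρ-proximate, and set ρ' = min(ρ, 1/2). Then for every SLKKM coloring χ : Λ → C and every ε ∈ (0, 1/2], there exists a point p ∈ [0,1]^d such that the open ℓ∞ ball of radius ε centered at p contains points of Λ of at least ⌈(1 + (2/3)(ε−ρ'))^d⌉ different colors. -/

import Mathlib

open MeasureTheory Set
set_option maxHeartbeats 1000000
open scoped ENNReal

/-- A face of the cube `[0,1]^d`: a product `∏ᵢ Fᵢ` where each `Fᵢ` is `{0}`, `{1}`, or `[0,1]`. -/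
def IsFace (d : ℕ) (F : Set (Fin d → ℝ)) : Prop :=
  ∃ s : Fin d → Set ℝ,
    (∀ i, s i = {0} ∨ s i = {1} ∨ s i = Set.Icc 0 1) ∧ F = Set.univ.pi s

/-- `Λ ⊆ [0,1]^d` is `ρ`-proximate: for every face `F` and every `x ∈ F` there is
`y ∈ F ∩ Λ` with `‖x − y‖_∞ ≤ ρ`. -/
def IsProximate (d : ℕ) (ρ : ℝ) (Λ : Set (Fin d → ℝ)) : Prop :=
  ∀ F : Set (Fin d → ℝ), IsFace d F → ∀ x ∈ F, ∃ y ∈ F ∩ Λ, dist x y ≤ ρ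

theorem neighborhood_sperner_half
    (d : ℕ) (hd : 1 ≤ d) (ρ : ℝ) (hρ : 0 ≤ ρ)
    (Λ : Set (Fin d → ℝ)) (hΛ : Λ ⊆ Set.Icc 0 1) (hprox : IsProximate d ρ Λ)
    (C : Type*) (χ : (Fin d → ℝ) → C)
    (hχ : ∀ x ∈ Λ, ∀ y ∈ Λ, dist x y = 1 → χ x ≠ χ y)
    (ε : ℝ) (hε : ε ∈ Set.Ioc (0 : ℝ) (1/2)) :
    ∃ p ∈ Set.Icc (0 : Fin d → ℝ) 1,
      (⌈(1 + (2/3) * (ε - min ρ (1/2))) ^ d⌉₊ : ℕ∞) ≤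
        {c : C | (Λ ∩ χ ⁻¹' {c} ∩ Metric.ball p ε).Nonempty}.encard := by
  classical
  obtain ⟨hε0, hε2⟩ := hε
  -- the origin belongs to Λ
  have h0Λ : (0 : Fin d → ℝ) ∈ Λ := by
    have hface : IsFace d (Set.univ.pi (fun _ => ({0} : Set ℝ))) :=
      ⟨fun _ => {0}, fun _ => Or.inl rfl, rfl⟩
    have h0F : (0 : Fin d → ℝ) ∈ Set.univ.pi (fun _ => ({0} : Set ℝ)) := by
      intro i _; rfl
    obtain ⟨y, ⟨hyF, hyΛ⟩, -⟩ := hprox _ hface 0 h0F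
    have : y = 0 := funext fun i => hyF i (Set.mem_univ i)
    rwa [this] at hyΛ
  by_cases hcase : min ρ (1/2) < ε
  · -- main case
    have hρhalf : ρ < ε := by
      rcases min_cases ρ (1/2) with ⟨h1, h2⟩ | ⟨h1, h2⟩
      · rwa [h1] at hcase
      · rw [h1] at hcase; linarith
    have hmin : min ρ (1/2) = ρ := min_eq_left (by linarith)
    rw [hmin]
    obtain ⟨δ, hδ0, hδhalf, hεδ⟩ : ∃ δ : ℝ, 0 < δ ∧ δ ≤ 1/2 ∧ ε = ρ + δ :=
      ⟨ε - ρ, by linarith, by linarith, by ring⟩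
    have hgoal : (1 + 2/3 * (ε - ρ)) = 1 + 2/3 * δ := by rw [hεδ]; ring
    rw [hgoal]
    -- sign pattern of a color
    set pat : C → (Fin d → Bool) :=
      fun c i => if (∃ y, y ∈ Λ ∧ χ y = c ∧ y i = 1) then true else false with hpatdef
    have dist_one : ∀ y ∈ Λ, ∀ y' ∈ Λ, ∀ i : Fin d, y i = 0 → y' i = 1 → dist y y' = 1 := by
      intro y hy y' hy' i h0 h1
      have hyI := hΛ hy; have hy'I := hΛ hy'
      refine le_antisymm ((dist_pi_le_iff one_pos.le).mpr fun j => ?_) ?_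
      · have a1 : (0:ℝ) ≤ y j := hyI.1 j
        have a2 : y j ≤ 1 := hyI.2 j
        have a3 : (0:ℝ) ≤ y' j := hy'I.1 j
        have a4 : y' j ≤ 1 := hy'I.2 j
        rw [Real.dist_eq]
        rw [abs_le]; constructor <;> linarith
      · have : dist (y i) (y' i) ≤ dist y y' := dist_le_pi_dist y y' i
        rw [h0, h1, Real.dist_eq] at this
        simpa using this
    have pat_one : ∀ y ∈ Λ, ∀ i, y i = 1 → pat (χ y) i = true := by
      intro y hy i h1
      simp only [hpatdef, if_pos]
      rw [if_pos ⟨y, hy, rfl, h1⟩]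
    have pat_zero : ∀ y ∈ Λ, ∀ i, y i = 0 → pat (χ y) i = false := by
      intro y hy i h0
      simp only [hpatdef]
      rw [if_neg]
      rintro ⟨y', hy', hχy', h1⟩
      exact hχ y hy y' hy' (dist_one y hy y' hy' i h0 h1) hχy'.symm
    -- shift vectors, open color sets, translated boxes
    set w : (Fin d → Bool) → (Fin d → ℝ) := fun τ i => if τ i then -(δ/3) else δ/3 with hwdef
    set U : (Fin d → Bool) → Set (Fin d → ℝ) :=
      fun τ => {p | ∃ y, y ∈ Λ ∧ pat (χ y) = τ ∧ dist p y < ε} with hUdef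
    set lo : Fin d → ℝ := fun _ => -(δ/3) with hlodef
    set hi : Fin d → ℝ := fun _ => 1 + δ/3 with hhidef
    set B : (Fin d → Bool) → Set (Fin d → ℝ) :=
      fun τ => (Set.Icc (lo + w τ) (hi + w τ) ∩ Set.Icc 0 1) ∩ U τ with hBdef
    have hUopen : ∀ τ, IsOpen (U τ) := by
      intro τ
      rw [Metric.isOpen_iff]
      rintro p ⟨y, hy, hpat, hlt⟩
      refine ⟨ε - dist p y, by linarith, ?_⟩
      intro p' hp'
      rw [Metric.mem_ball] at hp'
      exact ⟨y, hy, hpat, by have := dist_triangle p' p y; linarith⟩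
    have hBmeas : ∀ τ, MeasurableSet (B τ) :=
      fun τ => ((measurableSet_Icc.inter measurableSet_Icc).inter (hUopen τ).measurableSet)
    have hBsub : ∀ τ, B τ ⊆ Set.Icc 0 1 := fun τ => fun p hp => hp.1.2
    -- the covering claim
    have cover : ∀ q ∈ Set.Icc lo hi, ∃ τ, q + w τ ∈ B τ := by
      intro q hq
      have hq1 : ∀ i, lo i ≤ q i := fun i => hq.1 i
      have hq2 : ∀ i, q i ≤ hi i := fun i => hq.2 i
      set s : Fin d → Set ℝ :=
        fun i => if q i < δ/3 then {0} else if 1 - δ/3 < q i then {1} else Set.Icc 0 1 with hsdef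
      have hface : IsFace d (Set.univ.pi s) := by
        refine ⟨s, fun i => ?_, rfl⟩
        simp only [hsdef]
        split_ifs with h1 h2
        · exact Or.inl rfl
        · exact Or.inr (Or.inl rfl)
        · exact Or.inr (Or.inr rfl)
      set p₀ : Fin d → ℝ :=
        fun i => if q i < δ/3 then 0 else if 1 - δ/3 < q i then 1 else q i with hp₀def
      have hp₀F : p₀ ∈ Set.univ.pi s := by
        intro i _
        simp only [hsdef, hp₀def]
        split_ifs with h1 h2
        · exact rfl
        · exact rfl
        · push_neg at h1 h2
          exact ⟨by linarith, by linarith⟩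
      obtain ⟨y, ⟨hyF, hyΛ⟩, hdy⟩ := hprox _ hface p₀ hp₀F
      have hyi : ∀ i, y i ∈ s i := fun i => hyF i (Set.mem_univ i)
      refine ⟨pat (χ y), ?_⟩
      have key : ∀ i, (0 ≤ q i + w (pat (χ y)) i ∧ q i + w (pat (χ y)) i ≤ 1) ∧
          dist (q i + w (pat (χ y)) i) (y i) < ε := by
        intro i
        have hb := hyi i
        have hqlo : -(δ/3) ≤ q i := hq1 i
        have hqhi : q i ≤ 1 + δ/3 := hq2 i
        simp only [hsdef] at hb
        split_ifs at hb with h1 h2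
        · -- low coordinate : y i = 0
          have hy0 : y i = 0 := hb
          have hw : w (pat (χ y)) i = δ/3 := by
            simp [hwdef, pat_zero y hyΛ i hy0]
          rw [hw, hy0, Real.dist_eq]
          refine ⟨⟨by linarith, by linarith⟩, ?_⟩
          rw [abs_lt]
          constructor <;> linarith
        · -- high coordinate : y i = 1
          have hy1 : y i = 1 := hb
          have hw : w (pat (χ y)) i = -(δ/3) := by
            simp [hwdef, pat_one y hyΛ i hy1]
          rw [hw, hy1, Real.dist_eq]
          refine ⟨⟨by linarith, by linarith⟩, ?_⟩
          rw [abs_lt]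
          constructor <;> linarith
        · -- middle coordinate
          push_neg at h1 h2
          have hp₀i : p₀ i = q i := by
            simp only [hp₀def]
            rw [if_neg (by linarith), if_neg (by linarith)]
          have hqy : |q i - y i| ≤ ρ := by
            have := dist_le_pi_dist p₀ y i
            rw [Real.dist_eq, hp₀i] at this
            linarith [this.trans hdy]
          have hwabs : w (pat (χ y)) i = δ/3 ∨ w (pat (χ y)) i = -(δ/3) := by
            simp only [hwdef]
            split_ifs
            · exact Or.inr rfl
            · exact Or.inl rfl
          have habs := abs_le.mp hqy
          rcases hwabs with hw | hw <;> rw [hw, Real.dist_eq, abs_lt] <;>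
            exact ⟨⟨by linarith, by linarith⟩, ⟨by linarith, by linarith⟩⟩
      refine ⟨⟨?_, ?_⟩, ⟨y, hyΛ, rfl, ?_⟩⟩
      · refine ⟨fun i => ?_, fun i => ?_⟩
        · show lo i + w (pat (χ y)) i ≤ q i + w (pat (χ y)) i
          exact add_le_add (hq1 i) le_rfl
        · show q i + w (pat (χ y)) i ≤ hi i + w (pat (χ y)) i
          exact add_le_add (hq2 i) le_rfl
      · exact ⟨fun i => (key i).1.1, fun i => (key i).1.2⟩
      · exact (dist_pi_lt_iff hε0).mpr fun i => (key i).2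
    -- contradiction setup
    by_contra hcon
    push_neg at hcon
    set N : ℕ := ⌈(1 + 2/3 * δ) ^ d⌉₊ with hNdef
    have hx0 : (0:ℝ) < (1 + 2/3 * δ) ^ d := by positivity
    have hN1 : 1 ≤ N := Nat.one_le_iff_ne_zero.mpr (by
      simp only [hNdef]
      exact Nat.ceil_pos.mpr hx0 |>.ne')
    -- multiplicity bound
    have hcard : ∀ p ∈ Set.Icc (0 : Fin d → ℝ) 1, ∀ s : Finset (Fin d → Bool),
        (∀ τ ∈ s, p ∈ B τ) → s.card ≤ N - 1 := by
      intro p hp s hs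
      rcases s.eq_empty_or_nonempty with rfl | ⟨τ₀, hτ₀⟩
      · simp
      obtain ⟨y₀, hy₀, -, -⟩ := (hs τ₀ hτ₀).2
      set M : Set C := {c : C | (Λ ∩ χ ⁻¹' {c} ∩ Metric.ball p ε).Nonempty} with hMdef
      set f : (Fin d → Bool) → C :=
        fun τ => if h : ∃ c, pat c = τ ∧ c ∈ M then h.choose else χ y₀ with hfdef
      have hf : ∀ τ ∈ s, pat (f τ) = τ ∧ f τ ∈ M := by
        intro τ hτ
        have hpB := hs τ hτ
        obtain ⟨y, hy, hpat, hlt⟩ := hpB.2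
        have hex : ∃ c, pat c = τ ∧ c ∈ M :=
          ⟨χ y, hpat, ⟨y, ⟨hy, rfl⟩, by rwa [Metric.mem_ball, dist_comm]⟩⟩
        simp only [hfdef, dif_pos hex]
        exact hex.choose_spec
      have hinj : Set.InjOn f (s : Set (Fin d → Bool)) := by
        intro a ha b hb hab
        rw [← (hf a ha).1, ← (hf b hb).1, hab]
      have himg : f '' (s : Set (Fin d → Bool)) ⊆ M := by
        rintro _ ⟨τ, hτ, rfl⟩
        exact (hf τ hτ).2
      have h1 : ((s.card : ℕ) : ℕ∞) ≤ M.encard := by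
        rw [← Set.encard_coe_eq_coe_finsetCard s, ← hinj.encard_image]
        exact Set.encard_mono himg
      have h2 : M.encard < (N : ℕ∞) := hcon p hp
      have : ((s.card : ℕ) : ℕ∞) < (N : ℕ∞) := lt_of_le_of_lt h1 h2
      have hlt : s.card < N := by exact_mod_cast this
      omega
    -- measure computation
    have hvol1 : volume (Set.Icc (0 : Fin d → ℝ) 1) = 1 := by
      rw [Real.volume_Icc_pi]
      norm_num
    have hvolK : volume (Set.Icc lo hi) = ENNReal.ofReal ((1 + 2/3 * δ) ^ d) := by
      calc volume (Set.Icc lo hi) = ∏ i : Fin d, ENNReal.ofReal (hi i - lo i) :=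
            Real.volume_Icc_pi
        _ = ∏ _i : Fin d, ENNReal.ofReal (1 + 2/3 * δ) :=
            Finset.prod_congr rfl (fun i _ => by
              rw [show hi i - lo i = 1 + 2/3 * δ from by
                simp only [hlodef, hhidef]; ring])
        _ = ENNReal.ofReal ((1 + 2/3 * δ) ^ d) := by
            rw [Finset.prod_const, Finset.card_univ, Fintype.card_fin,
              ← ENNReal.ofReal_pow (by linarith)]
    have hchain : volume (Set.Icc lo hi) ≤ ∑ τ : Fin d → Bool, volume (B τ) := by
      have hsubset : Set.Icc lo hi ⊆ ⋃ τ, (fun x => x + w τ) ⁻¹' B τ := by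
        intro q hq
        obtain ⟨τ, hτ⟩ := cover q hq
        exact Set.mem_iUnion.mpr ⟨τ, hτ⟩
      calc volume (Set.Icc lo hi) ≤ volume (⋃ τ, (fun x => x + w τ) ⁻¹' B τ) :=
            measure_mono hsubset
        _ ≤ ∑' τ, volume ((fun x => x + w τ) ⁻¹' B τ) := measure_iUnion_le _
        _ = ∑ τ : Fin d → Bool, volume ((fun x => x + w τ) ⁻¹' B τ) := tsum_fintype _
        _ = ∑ τ : Fin d → Bool, volume (B τ) := by
            refine Finset.sum_congr rfl fun τ _ => ?_
            exact measure_preimage_add_right volume (w τ) (B τ)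
    have hsum_le : ∑ τ : Fin d → Bool, volume (B τ) ≤ ((N - 1 : ℕ) : ℝ≥0∞) := by
      have hptwise : ∀ p, ∑ τ : Fin d → Bool, (B τ).indicator (fun _ => (1 : ℝ≥0∞)) p ≤
          (Set.Icc (0 : Fin d → ℝ) 1).indicator (fun _ => ((N - 1 : ℕ) : ℝ≥0∞)) p := by
        intro p
        by_cases hp : p ∈ Set.Icc (0 : Fin d → ℝ) 1
        · rw [Set.indicator_of_mem hp]
          have hcount : ∑ τ : Fin d → Bool, (B τ).indicator (fun _ => (1 : ℝ≥0∞)) p =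
              ((Finset.univ.filter (fun τ => p ∈ B τ)).card : ℝ≥0∞) := by
            rw [Finset.card_filter]
            push_cast
            refine Finset.sum_congr rfl fun τ _ => ?_
            by_cases hτ : p ∈ B τ <;> simp [Set.indicator, hτ]
          rw [hcount]
          exact_mod_cast Nat.cast_le.mpr
            (hcard p hp _ (fun τ hτ => (Finset.mem_filter.mp hτ).2))
        · have : ∀ τ : Fin d → Bool, (B τ).indicator (fun _ => (1 : ℝ≥0∞)) p = 0 := by
            intro τ
            exact Set.indicator_of_notMem (fun hmem => hp (hBsub τ hmem)) _
          simp only [this, Finset.sum_const_zero, Set.indicator_of_notMem hp]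
          exact le_rfl
      calc ∑ τ : Fin d → Bool, volume (B τ)
          = ∑ τ : Fin d → Bool, ∫⁻ p, (B τ).indicator (fun _ => (1 : ℝ≥0∞)) p := by
            refine Finset.sum_congr rfl fun τ _ => ?_
            rw [show (fun _ : Fin d → ℝ => (1 : ℝ≥0∞)) = (1 : (Fin d → ℝ) → ℝ≥0∞) from rfl,
              lintegral_indicator_one (hBmeas τ)]
        _ = ∫⁻ p, ∑ τ : Fin d → Bool, (B τ).indicator (fun _ => (1 : ℝ≥0∞)) p := by
            rw [lintegral_finset_sum' _
              (fun τ _ => (Measurable.indicator measurable_const (hBmeas τ)).aemeasurable)]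
        _ ≤ ∫⁻ p, (Set.Icc (0 : Fin d → ℝ) 1).indicator (fun _ => ((N - 1 : ℕ) : ℝ≥0∞)) p :=
            lintegral_mono hptwise
        _ = ((N - 1 : ℕ) : ℝ≥0∞) * volume (Set.Icc (0 : Fin d → ℝ) 1) :=
            lintegral_indicator_const measurableSet_Icc _
        _ = ((N - 1 : ℕ) : ℝ≥0∞) := by rw [hvol1, mul_one]
    have hfinal : ENNReal.ofReal ((1 + 2/3 * δ) ^ d) ≤ ((N - 1 : ℕ) : ℝ≥0∞) := by
      rw [← hvolK]
      exact hchain.trans hsum_le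
    rw [← ENNReal.ofReal_natCast (N - 1)] at hfinal
    have hreal : (1 + 2/3 * δ) ^ d ≤ ((N - 1 : ℕ) : ℝ) :=
      (ENNReal.ofReal_le_ofReal_iff (by positivity)).mp hfinal
    have : N ≤ N - 1 := by
      rw [hNdef]
      exact Nat.ceil_le.mpr hreal
    omega
  · -- degenerate case : ε ≤ min ρ (1/2)
    push_neg at hcase
    refine ⟨0, ⟨le_refl _, fun i => zero_le_one⟩, ?_⟩
    have hle1 : (1 + 2/3 * (ε - min ρ (1/2))) ^ d ≤ 1 := by
      apply pow_le_one₀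
      · have : min ρ (1/2) ≤ 1/2 := min_le_right _ _
        nlinarith
      · nlinarith
    have hceil : ⌈(1 + 2/3 * (ε - min ρ (1/2))) ^ d⌉₊ ≤ 1 := by
      exact Nat.ceil_le.mpr (by exact_mod_cast hle1)
    have hne : ({c : C | (Λ ∩ χ ⁻¹' {c} ∩ Metric.ball 0 ε).Nonempty}).Nonempty :=
      ⟨χ 0, ⟨0, ⟨h0Λ, rfl⟩, Metric.mem_ball_self hε0⟩⟩
    calc (⌈(1 + 2/3 * (ε - min ρ (1/2))) ^ d⌉₊ : ℕ∞) ≤ ((1 : ℕ) : ℕ∞) := Nat.cast_le.mpr hceil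
      _ ≤ _ := by
          rw [Nat.cast_one]
          exact Set.one_le_encard_iff_nonempty.mpr hne
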